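/- Let P be a Sylow p-subgroup of a finite group G. Then P ∩ G^{𝔑} = P ∩ G^{𝔑_p}, where G^{𝔑} is the nilpotent residual and G^{𝔑_p} is the p-nilpotent residual of G. -/

import Mathlib

open Subgroup Pointwise

/-- `A < B` is a chief factor of `G`. -/
def IsChiefFactor (G : Type*) [Group G] (A B : Subgroup G) : Prop :=
  A.Normal ∧ B.Normal ∧ A < B ∧
    ∀ N : Subgroup G, N.Normal → A ≤ N → N ≤ B → N = A ∨ N = B

/-- The order of the factor group `B/A`. -/
noncomputable def factorCard {G : Type*} [Group G] (A B : Subgroup G) : ℕ :=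
  Nat.card B / Nat.card A

/-- A finite group is `p`-solvable if every chief factor is a `p`-group or a `p'`-group. -/
def IsPSolvable (p : ℕ) (G : Type*) [Group G] : Prop :=
  ∀ A B : Subgroup G, IsChiefFactor G A B →
    (∃ n : ℕ, factorCard A B = p ^ n) ∨ ¬ p ∣ factorCard A B

/-- A finite group is `p`-supersolvable if it is `p`-solvable and every `p`-chief factor
has order `p`. -/
def IsPSupersolvable (p : ℕ) (G : Type*) [Group G] : Prop :=
  IsPSolvable p G ∧ ∀ A B : Subgroup G, IsChiefFactor G A B →
    p ∣ factorCard A B → factorCard A B = p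

/-- A finite group is `p`-nilpotent if it has a normal Hall `p'`-subgroup. -/
def IsPNilpotent (p : ℕ) (G : Type*) [Group G] : Prop :=
  ∃ H : Subgroup G, H.Normal ∧ ¬ p ∣ Nat.card H ∧ ∃ n : ℕ, H.index = p ^ n

/-- The quotient `G ⧸ N` is `p`-supersolvable (for `N` normal). -/
def QuotientIsPSupersolvable (p : ℕ) {G : Type*} [Group G] (N : Subgroup G) : Prop :=
  ∀ [N.Normal], IsPSupersolvable p (G ⧸ N)

/-- `R` is the `p`-supersolvable residual of `G`: the smallest normal subgroup with
`p`-supersolvable quotient. -/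
def IsPSupersolvableResidual (p : ℕ) {G : Type*} [Group G] (R : Subgroup G) : Prop :=
  R.Normal ∧ QuotientIsPSupersolvable p R ∧
    ∀ N : Subgroup G, N.Normal → QuotientIsPSupersolvable p N → R ≤ N

/-- the center `Z(K)` of a subgroup `K`, as a subgroup of the ambient group. -/
def centerOf {G : Type*} [Group G] (K : Subgroup G) : Subgroup G :=
  Subgroup.centralizer (K : Set G) ⊓ K

/-- `H` is c-embedded in `G` with respect to `K`: there is `B ≤ G` with `G = HB` and
`H ∩ B ≤ Z(K)`. -/
def IsCEmbedded {G : Type*} [Group G] (H K : Subgroup G) : Prop :=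
  ∃ B : Subgroup G, (∀ g : G, ∃ h ∈ H, ∃ b ∈ B, g = h * b) ∧ H ⊓ B ≤ centerOf K

/-- A group is quaternion-free if no section is isomorphic to the quaternion group `Q₈`. -/
def QuaternionFree (G : Type*) [Group G] : Prop :=
  ∀ (H : Subgroup G) (N : Subgroup H) [N.Normal], IsEmpty ((H ⧸ N) ≃* QuaternionGroup 2)

/-- the conjugate `P^x = x⁻¹ P x`. -/
def conjSub {G : Type*} [Group G] (P : Subgroup G) (x : G) : Subgroup G :=
  (MulAut.conj x⁻¹) • P

/-- The quotient `G ⧸ N` is nilpotent (for `N` normal). -/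
def QuotientIsNilpotent {G : Type*} [Group G] (N : Subgroup G) : Prop :=
  ∀ [N.Normal], Group.IsNilpotent (G ⧸ N)

/-- `R` is the nilpotent residual of `G`. -/
def IsNilpotentResidual {G : Type*} [Group G] (R : Subgroup G) : Prop :=
  R.Normal ∧ QuotientIsNilpotent R ∧
    ∀ N : Subgroup G, N.Normal → QuotientIsNilpotent N → R ≤ N

/-- The quotient `G ⧸ N` is p-nilpotent (for `N` normal). -/
def QuotientIsPNilpotent (p : ℕ) {G : Type*} [Group G] (N : Subgroup G) : Prop :=
  ∀ [N.Normal], IsPNilpotent p (G ⧸ N)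

/-- `R` is the p-nilpotent residual of `G`. -/
def IsPNilpotentResidual (p : ℕ) {G : Type*} [Group G] (R : Subgroup G) : Prop :=
  R.Normal ∧ QuotientIsPNilpotent p R ∧
    ∀ N : Subgroup G, N.Normal → QuotientIsPNilpotent p N → R ≤ N

lemma pi_eval_surj {ι : Type*} [DecidableEq ι] (f : ι → Type*) [∀ i, Group (f i)] (i : ι) :
    Function.Surjective (Pi.evalMonoidHom f i) :=
  fun y => ⟨Function.update 1 i y, Function.update_self i y 1⟩

lemma nilpotent_isPNilpotent (p : ℕ) (hp : p.Prime) (K : Type*) [Group K] [Finite K]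
    [Group.IsNilpotent K] :
    (∃ H : Subgroup K, H.Normal ∧ ¬ p ∣ Nat.card H ∧ ∃ n : ℕ, H.index = p ^ n) := by
  classical
  haveI : Fact p.Prime := ⟨hp⟩
  by_cases hpd : p ∣ Nat.card K
  · have hmem : p ∈ (Nat.card K).primeFactors :=
      Nat.mem_primeFactors.mpr ⟨hp, hpd, Nat.card_pos.ne'⟩
    obtain ⟨e⟩ := ((isNilpotent_of_finite_tfae (G := K)).out 0 4).mp ‹_›
    set q : (Nat.card K).primeFactors := ⟨p, hmem⟩
    let Q : Sylow p K := default
    let f : K →* Q := (Pi.evalMonoidHom (fun P : Sylow (q : ℕ) K => P) Q).comp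
      ((Pi.evalMonoidHom (fun r : (Nat.card K).primeFactors => ∀ P : Sylow (r : ℕ) K, P) q).comp
        e.symm.toMonoidHom)
    have hsurj : Function.Surjective f :=
      (pi_eval_surj _ Q).comp ((pi_eval_surj _ q).comp e.symm.surjective)
    have hix : f.ker.index = p ^ (Nat.card K).factorization p := by
      rw [Subgroup.index_ker, MonoidHom.range_eq_top.mpr hsurj, Subgroup.card_top,
        Q.card_eq_multiplicity]
    refine ⟨f.ker, inferInstance, ?_, _, hix⟩
    intro hdvd
    have h1 : Nat.card f.ker * f.ker.index = Nat.card K := Subgroup.card_mul_index _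
    have : p ^ ((Nat.card K).factorization p + 1) ∣ Nat.card K := by
      calc p ^ ((Nat.card K).factorization p + 1)
          = p * p ^ (Nat.card K).factorization p := pow_succ' p _
        _ ∣ Nat.card f.ker * f.ker.index := mul_dvd_mul hdvd (hix ▸ dvd_rfl)
        _ = Nat.card K := h1
    exact Nat.pow_succ_factorization_not_dvd Nat.card_pos.ne' hp this
  · exact ⟨⊤, inferInstance, by rwa [Subgroup.card_top], 0, by simp⟩

/-- `P ∩ G^{𝔑} = P ∩ G^{𝔑_p}` for a Sylow p-subgroup `P`. -/
theorem stmt12 (p : ℕ) (hp : p.Prime) (G : Type*) [Group G] [Finite G]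
    (P : Sylow p G) (R1 R2 : Subgroup G)
    (hR1 : IsNilpotentResidual R1) (hR2 : IsPNilpotentResidual p R2) :
    (P : Subgroup G) ⊓ R1 = (P : Subgroup G) ⊓ R2 := by
  haveI : Fact p.Prime := ⟨hp⟩
  obtain ⟨hR1n, hR1q, hR1min⟩ := hR1
  obtain ⟨hR2n, hR2q, hR2min⟩ := hR2
  haveI := hR1n; haveI := hR2n
  have h21 : R2 ≤ R1 := by
    refine hR2min R1 hR1n ?_
    intro _
    haveI : Group.IsNilpotent (G ⧸ R1) := hR1q
    exact nilpotent_isPNilpotent p hp _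
  obtain ⟨H, hHn, hHp, n, hHi⟩ := hR2q
  haveI := hHn
  set π := QuotientGroup.mk' R2 with hπ
  have h12 : (P : Subgroup G) ⊓ R1 ≤ R2 := by
    have hR1M : R1 ≤ H.comap π := by
      refine hR1min _ (hHn.comap π) ?_
      intro _
      have hcard : Nat.card (G ⧸ H.comap π) = p ^ n := by
        rw [← Subgroup.index_eq_card,
          Subgroup.index_comap_of_surjective _ (QuotientGroup.mk'_surjective R2), hHi]
      exact (IsPGroup.of_card hcard).isNilpotent
    rintro x ⟨hxP, hxR1⟩
    have hmem : π x ∈ H := hR1M hxR1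
    obtain ⟨k, hk⟩ := P.isPGroup' ⟨x, hxP⟩
    have hxk : x ^ p ^ k = 1 := by
      simpa [Subtype.ext_iff] using hk
    set y : H := ⟨π x, hmem⟩ with hy
    have hyk : y ^ p ^ k = 1 := by
      have : (π x) ^ p ^ k = 1 := by rw [← map_pow, hxk, map_one]
      exact Subtype.ext (by simpa using this)
    have hdvd1 : orderOf y ∣ p ^ k := orderOf_dvd_of_pow_eq_one hyk
    have hdvd2 : orderOf y ∣ Nat.card H := orderOf_dvd_natCard y
    obtain ⟨j, hj, hje⟩ := (Nat.dvd_prime_pow hp).mp hdvd1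
    have hj0 : j = 0 := by
      by_contra hj0
      exact hHp (dvd_trans (dvd_trans (dvd_pow_self p hj0) hje.symm.dvd) hdvd2)
    have : y = 1 := orderOf_eq_one_iff.mp (by rw [hje, hj0, pow_zero])
    have : π x = 1 := congrArg Subtype.val this
    exact (QuotientGroup.eq_one_iff x).mp this
  exact le_antisymm (le_inf inf_le_left h12) (inf_le_inf_left _ h21)
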